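/- Let A₁, A₂, A₃ be dichotomic observables on ℂ^{d₁}, let B¹_y, B²_y, B³_y (y = 1,2,3) be dichotomic observables on ℂ^{d₂}, let ρ₁ be a state on ℂ^{d₁}⊗ℂ^{d₂}, and let η₁, η₂, η₃ ∈ (0,1] with ξ₁ = √(1−η₁²), ξ₂ = √(1−η₂²). Write M₁ = A₁+A₂−A₃, M₂ = A₁−A₂+A₃, M₃ = −A₁+A₂+A₃, and define ρ₂ = ((1+ξ₁)/2)ρ₁ + ((1−ξ₁)/6)Σ_y(1⊗B¹_y)ρ₁(1⊗B¹_y) and ρ₃ = ((1+ξ₂)/2)ρ₂ + ((1−ξ₂)/6)Σ_y(1⊗B²_y)ρ₂(1⊗B²_y). Suppose Re Tr[Σ_y M_y⊗(η₁B¹_y) ρ₁] = 6η₁ and Re Tr[Σ_y M_y⊗(η₂B²_y) ρ₂] = 3η₂(1+ξ₁). Then Re Tr[Σ_y M_y⊗(η₃B³_y) ρ₃] ≤ (3η₃/2)(1+√(1−η₁²))(1+√(1−η₂²)). -/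

import Mathlib

open Matrix Kronecker ComplexOrder

namespace SeqBell

variable {m n : Type*} [Fintype m] [Fintype n]

lemma trace_conjT_self (X : Matrix m n ℂ) :
    (Xᴴ * X).trace = ((∑ j, ∑ i, Complex.normSq (X i j) : ℝ) : ℂ) := by
  simp only [Matrix.trace, Matrix.diag, Matrix.mul_apply, Matrix.conjTranspose_apply]
  push_cast
  congr 1; ext j; congr 1; ext i
  rw [Complex.normSq_eq_conj_mul_self]
  rfl

lemma trace_conjT_self_re_nonneg (X : Matrix m n ℂ) : 0 ≤ ((Xᴴ * X).trace).re := by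
  rw [trace_conjT_self, Complex.ofReal_re]
  exact Finset.sum_nonneg fun j _ => Finset.sum_nonneg fun i _ => Complex.normSq_nonneg _

lemma eq_zero_of_trace_conjT_self_re (X : Matrix m n ℂ)
    (h : ((Xᴴ * X).trace).re = 0) : X = 0 := by
  rw [trace_conjT_self, Complex.ofReal_re] at h
  ext i j
  have h1 : ∀ j₀ ∈ (Finset.univ : Finset n), 0 ≤ ∑ i, Complex.normSq (X i j₀) := by
    intro j₀ _; exact Finset.sum_nonneg fun i _ => Complex.normSq_nonneg _
  have h2 := (Finset.sum_eq_zero_iff_of_nonneg h1).mp h j (Finset.mem_univ j)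
  have h3 : ∀ i₀ ∈ (Finset.univ : Finset m), 0 ≤ Complex.normSq (X i₀ j) := by
    intro i₀ _; exact Complex.normSq_nonneg _
  have h4 := (Finset.sum_eq_zero_iff_of_nonneg h3).mp h2 i (Finset.mem_univ i)
  simpa using Complex.normSq_eq_zero.mp h4


variable {N : Type*} [Fintype N] [DecidableEq N]

lemma unitary_trace_re_le (ρ U : Matrix N N ℂ) (hρ : ρ.PosSemidef) (htr : ρ.trace = 1)
    (hU : Uᴴ * U = 1) : ((U * ρ).trace).re ≤ 1 ∧ (((U * ρ).trace).re = 1 → U * ρ = ρ) := by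
  obtain ⟨B, hB⟩ : ∃ B : Matrix N N ℂ, ρ = Bᴴ * B := by
    open scoped MatrixOrder in exact CStarAlgebra.nonneg_iff_eq_star_mul_self.mp hρ.nonneg
  set X := B * (1 - U)ᴴ with hX
  have hXX : Xᴴ * X = (1 - U) * ρ * (1 - U)ᴴ := by
    rw [hX, Matrix.conjTranspose_mul, Matrix.conjTranspose_conjTranspose, hB]
    noncomm_ring
  have hexp : (Xᴴ * X).trace = 2 - (U * ρ).trace - star ((U * ρ).trace) := by
    rw [hXX]
    have h1 : (1 - U) * ρ * (1 - U)ᴴ = ρ - U * ρ - ρ * Uᴴ + U * ρ * Uᴴ := by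
      rw [Matrix.conjTranspose_sub, Matrix.conjTranspose_one]
      noncomm_ring
    rw [h1]
    have h2 : (U * ρ * Uᴴ).trace = 1 := by
      rw [Matrix.trace_mul_cycle, Matrix.mul_assoc] at *
      rw [show Uᴴ * (U * ρ) = Uᴴ * U * ρ from (Matrix.mul_assoc _ _ _).symm, hU,
        Matrix.one_mul, htr]
    have h3 : (ρ * Uᴴ).trace = star ((U * ρ).trace) := by
      have : ρ * Uᴴ = (U * ρ)ᴴ := by
        rw [Matrix.conjTranspose_mul, hρ.isHermitian.eq]
      rw [this, Matrix.trace_conjTranspose]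
    simp only [Matrix.trace_add, Matrix.trace_sub, h2, h3, htr]
    ring
  have hre : ((Xᴴ * X).trace).re = 2 - 2 * ((U * ρ).trace).re := by
    rw [hexp]
    simp [Complex.sub_re, Complex.add_re]
    ring
  have hnn := trace_conjT_self_re_nonneg X
  constructor
  · rw [hre] at hnn; linarith
  · intro heq
    have hz : ((Xᴴ * X).trace).re = 0 := by rw [hre, heq]; ring
    have hX0 : X = 0 := eq_zero_of_trace_conjT_self_re X hz
    have h1U : (1 - U) * ρ = 0 := by
      have : (1 - U) * ρ = Xᴴ * B := by
        rw [hX, Matrix.conjTranspose_mul, Matrix.conjTranspose_conjTranspose, hB,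
          Matrix.mul_assoc]
      rw [this, hX0, Matrix.conjTranspose_zero, Matrix.zero_mul]
    have h2 : ρ - U * ρ = 0 := by
      have := h1U
      rwa [Matrix.sub_mul, Matrix.one_mul] at this
    have := sub_eq_zero.mp h2
    exact this.symm
  

lemma core_V (P Q : Fin 3 → Matrix N N ℂ) (ρ : Matrix N N ℂ)
    (hPQ : ∀ y z, P y * Q z = Q z * P y)
    (hQQ : ∀ y, Q y * Q y = 1)
    (hPρ : ∀ y, P y * ρ = (2:ℂ) • (Q y * ρ))
    (hPpair : ∀ y z, y ≠ z → (P y + P z) * (P y + P z) = (4:ℂ) • 1)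
    (hQsum : (Q 0 + Q 1 + Q 2) * ρ = 0) :
    ∀ z, Q 0 * (Q z * (Q 0 * ρ)) + Q 1 * (Q z * (Q 1 * ρ)) + Q 2 * (Q z * (Q 2 * ρ)) = 0 := by
  have hPPρ : ∀ y z, P y * (P z * ρ) = (4:ℂ) • (Q z * (Q y * ρ)) := by
    intro y z
    rw [hPρ z, mul_smul_comm, ← Matrix.mul_assoc, hPQ y z, Matrix.mul_assoc, hPρ y,
      mul_smul_comm, smul_smul]
    norm_num
  have hanti : ∀ y z, y ≠ z → Q y * (Q z * ρ) + Q z * (Q y * ρ) = -ρ := by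
    intro y z hyz
    have h1 : (P y + P z) * ((P y + P z) * ρ) = (4:ℂ) • ρ := by
      rw [← Matrix.mul_assoc, hPpair y z hyz, smul_mul_assoc, Matrix.one_mul]
    have h2 : (P y + P z) * ((P y + P z) * ρ)
        = (4:ℂ) • (Q y * (Q y * ρ)) + (4:ℂ) • (Q z * (Q y * ρ))
          + (4:ℂ) • (Q y * (Q z * ρ)) + (4:ℂ) • (Q z * (Q z * ρ)) := by
      simp only [add_mul, mul_add]
      rw [hPPρ y y, hPPρ y z, hPPρ z y, hPPρ z z]
      abel
    have h3 : Q y * (Q y * ρ) = ρ := by rw [← Matrix.mul_assoc, hQQ, Matrix.one_mul]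
    have h4 : Q z * (Q z * ρ) = ρ := by rw [← Matrix.mul_assoc, hQQ, Matrix.one_mul]
    rw [h3, h4, h1] at h2
    have h6 : (4:ℂ) • (Q y * (Q z * ρ) + Q z * (Q y * ρ) + ρ) = 0 := by
      have e : (4:ℂ) • (Q y * (Q z * ρ) + Q z * (Q y * ρ) + ρ)
          = ((4:ℂ) • ρ + (4:ℂ) • (Q z * (Q y * ρ)) + (4:ℂ) • (Q y * (Q z * ρ)) + (4:ℂ) • ρ)
            - (4:ℂ) • ρ := by module
      rw [e, ← h2, sub_self]
    have h7 : Q y * (Q z * ρ) + Q z * (Q y * ρ) + ρ = 0 := by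
      have := smul_eq_zero.mp h6
      rcases this with h | h
      · norm_num at h
      · exact h
    exact eq_neg_of_add_eq_zero_left h7
  have tgen : ∀ y z : Fin 3, y ≠ z → Q y * (Q z * (Q y * ρ)) = -(Q y * ρ) - Q z * ρ := by
    intro y z hyz
    have e : Q z * (Q y * ρ) = -ρ - Q y * (Q z * ρ) :=
      eq_sub_of_add_eq (hanti z y (Ne.symm hyz))
    rw [e, mul_sub, mul_neg, ← Matrix.mul_assoc, hQQ, Matrix.one_mul]
  have tdiag : ∀ z : Fin 3, Q z * (Q z * (Q z * ρ)) = Q z * ρ := by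
    intro z; rw [← Matrix.mul_assoc, hQQ, Matrix.one_mul]
  have hsum' : Q 0 * ρ + Q 1 * ρ + Q 2 * ρ = 0 := by
    rw [← add_mul, ← add_mul]; exact hQsum
  intro z
  fin_cases z
  · show Q 0 * (Q 0 * (Q 0 * ρ)) + Q 1 * (Q 0 * (Q 1 * ρ)) + Q 2 * (Q 0 * (Q 2 * ρ)) = 0
    rw [tdiag 0, tgen 1 0 (by decide), tgen 2 0 (by decide)]
    calc Q 0 * ρ + (-(Q 1 * ρ) - Q 0 * ρ) + (-(Q 2 * ρ) - Q 0 * ρ)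
        = -(Q 0 * ρ + Q 1 * ρ + Q 2 * ρ) := by abel
      _ = 0 := by rw [hsum', neg_zero]
  · show Q 0 * (Q 1 * (Q 0 * ρ)) + Q 1 * (Q 1 * (Q 1 * ρ)) + Q 2 * (Q 1 * (Q 2 * ρ)) = 0
    rw [tdiag 1, tgen 0 1 (by decide), tgen 2 1 (by decide)]
    calc -(Q 0 * ρ) - Q 1 * ρ + Q 1 * ρ + (-(Q 2 * ρ) - Q 1 * ρ)
        = -(Q 0 * ρ + Q 1 * ρ + Q 2 * ρ) := by abel
      _ = 0 := by rw [hsum', neg_zero]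
  · show Q 0 * (Q 2 * (Q 0 * ρ)) + Q 1 * (Q 2 * (Q 1 * ρ)) + Q 2 * (Q 2 * (Q 2 * ρ)) = 0
    rw [tdiag 2, tgen 0 2 (by decide), tgen 1 2 (by decide)]
    calc -(Q 0 * ρ) - Q 2 * ρ + (-(Q 1 * ρ) - Q 2 * ρ) + Q 2 * ρ
        = -(Q 0 * ρ + Q 1 * ρ + Q 2 * ρ) := by abel
      _ = 0 := by rw [hsum', neg_zero]


lemma core_red2 (P Q : Fin 3 → Matrix N N ℂ) (ρ G : Matrix N N ℂ) (α β : ℂ)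
    (hPQ : ∀ y z, P y * Q z = Q z * P y)
    (hGP : ∀ y, G * P y = P y * G)
    (hQQ : ∀ y, Q y * Q y = 1)
    (hPρ : ∀ y, P y * ρ = (2:ℂ) • (Q y * ρ))
    (hρP : ∀ y, ρ * P y = (2:ℂ) • (ρ * Q y))
    (hV : ∀ z, Q 0 * (Q z * (Q 0 * ρ)) + Q 1 * (Q z * (Q 1 * ρ)) + Q 2 * (Q z * (Q 2 * ρ)) = 0)
    (z : Fin 3) :
    (G * (P z * (α • ρ + β • (Q 0 * ρ * Q 0 + Q 1 * ρ * Q 1 + Q 2 * ρ * Q 2)))).trace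
      = (2:ℂ) * α * ((G * (Q z * ρ)).trace) := by
  have hρQ : ∀ y, ρ * Q y = (2⁻¹:ℂ) • (ρ * P y) := by
    intro y; rw [hρP, smul_smul]; norm_num
  have hT : ∀ y, (G * (P z * (Q y * ρ * Q y))).trace
      = (2:ℂ) * ((G * (Q y * (Q z * (Q y * ρ)))).trace) := by
    intro y
    have s1 : G * (P z * (Q y * ρ * Q y)) = (G * (P z * (Q y * ρ))) * Q y := by
      simp only [Matrix.mul_assoc]
    rw [s1, Matrix.trace_mul_comm]
    have s2 : P z * (Q y * ρ) = Q y * (P z * ρ) := by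
      rw [← Matrix.mul_assoc, hPQ z y, Matrix.mul_assoc]
    rw [s2, hPρ z]
    have s3 : Q y * (G * (Q y * ((2:ℂ) • (Q z * ρ)))) = (2:ℂ) • (Q y * (G * (Q y * (Q z * ρ)))) := by
      simp only [mul_smul_comm]
    rw [s3, Matrix.trace_smul, smul_eq_mul]
    congr 1
    rw [Matrix.trace_mul_comm]
    have s4 : G * (Q y * (Q z * ρ)) * Q y = G * (Q y * (Q z * (ρ * Q y))) := by
      simp only [Matrix.mul_assoc]
    rw [s4, hρQ y]
    have s5 : G * (Q y * (Q z * ((2⁻¹:ℂ) • (ρ * P y)))) = (2⁻¹:ℂ) • (G * (Q y * (Q z * ρ)) * P y) := by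
      simp only [mul_smul_comm, Matrix.mul_assoc]
    rw [s5, Matrix.trace_smul, smul_eq_mul, Matrix.trace_mul_comm]
    have s6 : P y * (G * (Q y * (Q z * ρ))) = G * (Q y * (Q z * (P y * ρ))) := by
      rw [← Matrix.mul_assoc, ← hGP y, Matrix.mul_assoc]
      congr 1
      rw [← Matrix.mul_assoc, hPQ y y, Matrix.mul_assoc]
      congr 1
      rw [← Matrix.mul_assoc, hPQ y z, Matrix.mul_assoc]
    rw [s6, hPρ y]
    have s7 : G * (Q y * (Q z * ((2:ℂ) • (Q y * ρ)))) = (2:ℂ) • (G * (Q y * (Q z * (Q y * ρ)))) := by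
      simp only [mul_smul_comm]
    rw [s7, Matrix.trace_smul, smul_eq_mul]
    ring
  have hmain : G * (P z * (α • ρ + β • (Q 0 * ρ * Q 0 + Q 1 * ρ * Q 1 + Q 2 * ρ * Q 2)))
      = α • (G * (P z * ρ)) + β • (G * (P z * (Q 0 * ρ * Q 0)) + G * (P z * (Q 1 * ρ * Q 1))
          + G * (P z * (Q 2 * ρ * Q 2))) := by
    simp only [mul_add, mul_smul_comm, smul_add]
  rw [hmain, Matrix.trace_add, Matrix.trace_smul, Matrix.trace_smul, Matrix.trace_add,
    Matrix.trace_add, hT 0, hT 1, hT 2]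
  have hPzρ : (G * (P z * ρ)).trace = (2:ℂ) * (G * (Q z * ρ)).trace := by
    rw [hPρ z, mul_smul_comm, Matrix.trace_smul, smul_eq_mul]
  rw [hPzρ]
  have hzero : (G * (Q 0 * (Q z * (Q 0 * ρ)))).trace + (G * (Q 1 * (Q z * (Q 1 * ρ)))).trace
      + (G * (Q 2 * (Q z * (Q 2 * ρ)))).trace = 0 := by
    rw [← Matrix.trace_add, ← Matrix.trace_add, ← mul_add, ← mul_add, hV z, mul_zero,
      Matrix.trace_zero]
  simp only [smul_eq_mul]
  linear_combination (2:ℂ) * β * hzero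
  
lemma core_red3 (P Q C : Fin 3 → Matrix N N ℂ) (ρ ρ' G : Matrix N N ℂ) (α β α₂ β₂ : ℂ)
    (hρ' : ρ' = α • ρ + β • (Q 0 * ρ * Q 0 + Q 1 * ρ * Q 1 + Q 2 * ρ * Q 2))
    (hPQ : ∀ y z, P y * Q z = Q z * P y)
    (hPC : ∀ y z, P y * C z = C z * P y)
    (hGP : ∀ y, G * P y = P y * G)
    (hQQ : ∀ y, Q y * Q y = 1)
    (hCC : ∀ y, C y * C y = 1)
    (hPρ : ∀ y, P y * ρ = (2:ℂ) • (Q y * ρ))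
    (hρP : ∀ y, ρ * P y = (2:ℂ) • (ρ * Q y))
    (hCρ : ∀ y, C y * ρ = Q y * ρ)
    (hρC : ∀ y, ρ * C y = ρ * Q y)
    (hV : ∀ z, Q 0 * (Q z * (Q 0 * ρ)) + Q 1 * (Q z * (Q 1 * ρ)) + Q 2 * (Q z * (Q 2 * ρ)) = 0)
    (z : Fin 3) :
    (G * (P z * (α₂ • ρ' + β₂ • (C 0 * ρ' * C 0 + C 1 * ρ' * C 1 + C 2 * ρ' * C 2)))).trace
      = (2:ℂ) * α₂ * α * ((G * (Q z * ρ)).trace) := by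
  have hρQ : ∀ y, ρ * Q y = (2⁻¹:ℂ) • (ρ * P y) := by
    intro y; rw [hρP, smul_smul]; norm_num
  have hQρhalf : ∀ y, Q y * ρ = (2⁻¹:ℂ) • (P y * ρ) := by
    intro y; rw [hPρ, smul_smul]; norm_num
  have hG'P : ∀ w y, (C w * (G * C w)) * P y = P y * (C w * (G * C w)) := by
    intro w y
    calc (C w * (G * C w)) * P y = C w * (G * (C w * P y)) := by simp only [Matrix.mul_assoc]
      _ = C w * (G * (P y * C w)) := by rw [← hPC y w]
      _ = C w * (P y * (G * C w)) := by rw [← Matrix.mul_assoc G, hGP y, Matrix.mul_assoc]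
      _ = (C w * P y) * (G * C w) := by rw [Matrix.mul_assoc]
      _ = (P y * C w) * (G * C w) := by rw [← hPC y w]
      _ = P y * (C w * (G * C w)) := by simp only [Matrix.mul_assoc]
  have hred2' : ∀ (G' : Matrix N N ℂ), (∀ y, G' * P y = P y * G') →
      (G' * (P z * ρ')).trace = (2:ℂ) * α * ((G' * (Q z * ρ)).trace) := by
    intro G' hG'
    rw [hρ']
    exact core_red2 P Q ρ G' α β hPQ hG' hQQ hPρ hρP hV z
  have hW : ∀ w, (G * (P z * (C w * ρ' * C w))).trace
      = (2:ℂ) * α * ((G * (C w * (Q z * (Q w * ρ)))).trace) := by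
    intro w
    have s1 : G * (P z * (C w * ρ' * C w)) = (G * (P z * (C w * ρ'))) * C w := by
      simp only [Matrix.mul_assoc]
    rw [s1, Matrix.trace_mul_comm]
    have s2 : P z * (C w * ρ') = C w * (P z * ρ') := by
      rw [← Matrix.mul_assoc, hPC z w, Matrix.mul_assoc]
    rw [s2]
    have s3 : C w * (G * (C w * (P z * ρ'))) = (C w * (G * C w)) * (P z * ρ') := by
      simp only [Matrix.mul_assoc]
    rw [s3, hred2' (C w * (G * C w)) (hG'P w)]
    congr 1
    have s4 : (C w * (G * C w)) * (Q z * ρ) = C w * (G * (C w * (Q z * ρ))) := by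
      simp only [Matrix.mul_assoc]
    rw [s4, Matrix.trace_mul_comm]
    have s5 : G * (C w * (Q z * ρ)) * C w = G * (C w * (Q z * (ρ * C w))) := by
      simp only [Matrix.mul_assoc]
    rw [s5, hρC w, hρQ w]
    have s6 : G * (C w * (Q z * ((2⁻¹:ℂ) • (ρ * P w))))
        = (2⁻¹:ℂ) • (G * (C w * (Q z * ρ)) * P w) := by
      simp only [mul_smul_comm, Matrix.mul_assoc]
    rw [s6, Matrix.trace_smul, smul_eq_mul, Matrix.trace_mul_comm]
    have s7 : P w * (G * (C w * (Q z * ρ))) = G * (C w * (Q z * (P w * ρ))) := by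
      rw [← Matrix.mul_assoc, ← hGP w, Matrix.mul_assoc]
      congr 1
      rw [← Matrix.mul_assoc, hPC w w, Matrix.mul_assoc]
      congr 1
      rw [← Matrix.mul_assoc, hPQ w z, Matrix.mul_assoc]
    rw [s7, hPρ w]
    have s8 : G * (C w * (Q z * ((2:ℂ) • (Q w * ρ)))) = (2:ℂ) • (G * (C w * (Q z * (Q w * ρ)))) := by
      simp only [mul_smul_comm]
    rw [s8, Matrix.trace_smul, smul_eq_mul]
    ring
  have hCQ : ∀ w, C w * (Q z * (Q w * ρ)) = Q w * (Q z * (Q w * ρ)) := by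
    intro w
    have e1 : Q z * (Q w * ρ) = (4⁻¹:ℂ) • (P w * (P z * ρ)) := by
      rw [hQρhalf w, mul_smul_comm, ← Matrix.mul_assoc, ← hPQ w z, Matrix.mul_assoc,
        hQρhalf z, mul_smul_comm, smul_smul]
      norm_num
    rw [e1]
    have lhs : C w * ((4⁻¹:ℂ) • (P w * (P z * ρ))) = (4⁻¹:ℂ) • (P w * (P z * (Q w * ρ))) := by
      rw [mul_smul_comm]
      congr 1
      rw [← Matrix.mul_assoc, ← hPC w w, Matrix.mul_assoc]
      congr 1
      rw [← Matrix.mul_assoc, ← hPC z w, Matrix.mul_assoc, hCρ w]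
    have rhs : Q w * ((4⁻¹:ℂ) • (P w * (P z * ρ))) = (4⁻¹:ℂ) • (P w * (P z * (Q w * ρ))) := by
      rw [mul_smul_comm]
      congr 1
      rw [← Matrix.mul_assoc, ← hPQ w w, Matrix.mul_assoc]
      congr 1
      rw [← Matrix.mul_assoc, ← hPQ z w, Matrix.mul_assoc]
    rw [lhs, rhs]
  have hmain : G * (P z * (α₂ • ρ' + β₂ • (C 0 * ρ' * C 0 + C 1 * ρ' * C 1 + C 2 * ρ' * C 2)))
      = α₂ • (G * (P z * ρ')) + β₂ • (G * (P z * (C 0 * ρ' * C 0)) + G * (P z * (C 1 * ρ' * C 1))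
          + G * (P z * (C 2 * ρ' * C 2))) := by
    simp only [mul_add, mul_smul_comm, smul_add]
  rw [hmain, Matrix.trace_add, Matrix.trace_smul, Matrix.trace_smul, Matrix.trace_add,
    Matrix.trace_add, hW 0, hW 1, hW 2, hCQ 0, hCQ 1, hCQ 2, hred2' G hGP]
  have hzero : (G * (Q 0 * (Q z * (Q 0 * ρ)))).trace + (G * (Q 1 * (Q z * (Q 1 * ρ)))).trace
      + (G * (Q 2 * (Q z * (Q 2 * ρ)))).trace = 0 := by
    rw [← Matrix.trace_add, ← Matrix.trace_add, ← mul_add, ← mul_add, hV z, mul_zero,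
      Matrix.trace_zero]
  simp only [smul_eq_mul]
  linear_combination (2:ℂ) * α * β₂ * hzero


variable {dA dB : Type*} [Fintype dA] [Fintype dB] [DecidableEq dA] [DecidableEq dB]

lemma kronT (A : Matrix dA dA ℂ) (B : Matrix dB dB ℂ) : (A ⊗ₖ B)ᴴ = Aᴴ ⊗ₖ Bᴴ := by
  ext i j
  simp [Matrix.conjTranspose_apply, Matrix.kroneckerMap_apply, star_mul']

lemma kron_AB (Y : Matrix dA dA ℂ) (X : Matrix dB dB ℂ) :
    (Y ⊗ₖ (1 : Matrix dB dB ℂ)) * ((1 : Matrix dA dA ℂ) ⊗ₖ X) = Y ⊗ₖ X := by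
  rw [← Matrix.mul_kronecker_mul, Matrix.mul_one, Matrix.one_mul]

lemma kron_BA (Y : Matrix dA dA ℂ) (X : Matrix dB dB ℂ) :
    ((1 : Matrix dA dA ℂ) ⊗ₖ X) * (Y ⊗ₖ (1 : Matrix dB dB ℂ)) = Y ⊗ₖ X := by
  rw [← Matrix.mul_kronecker_mul, Matrix.mul_one, Matrix.one_mul]

lemma kronB_mul (X X' : Matrix dB dB ℂ) :
    ((1 : Matrix dA dA ℂ) ⊗ₖ X) * ((1 : Matrix dA dA ℂ) ⊗ₖ X')
      = (1 : Matrix dA dA ℂ) ⊗ₖ (X * X') := by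
  rw [← Matrix.mul_kronecker_mul, Matrix.one_mul]

lemma kronA_mul (Y Y' : Matrix dA dA ℂ) :
    (Y ⊗ₖ (1 : Matrix dB dB ℂ)) * (Y' ⊗ₖ (1 : Matrix dB dB ℂ))
      = (Y * Y') ⊗ₖ (1 : Matrix dB dB ℂ) := by
  rw [← Matrix.mul_kronecker_mul, Matrix.one_mul]

end SeqBell

set_option maxHeartbeats 2000000

open SeqBell

/-- Theorem 2: if the Alice–Bob¹ and Alice–Bob² sequential Bell values attain
their maxima `6η₁` and `3η₂(1+ξ₁)`, then the Alice–Bob³ Bell value on the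
twice-updated state `ρ₃` is at most `(3η₃/2)(1+√(1−η₁²))(1+√(1−η₂²))`.
Here `B1 y`, `B2 y`, `B3 y` are Bob¹'s, Bob²'s, Bob³'s observables. -/
theorem seq_bell_bound_bob3 {d₁ d₂ : ℕ}
    (A : Fin 3 → Matrix (Fin d₁) (Fin d₁) ℂ)
    (B1 B2 B3 : Fin 3 → Matrix (Fin d₂) (Fin d₂) ℂ)
    (hA : ∀ x, (A x).IsHermitian) (hAsq : ∀ x, A x * A x = 1)
    (hB1 : ∀ y, (B1 y).IsHermitian) (hB1sq : ∀ y, B1 y * B1 y = 1)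
    (hB2 : ∀ y, (B2 y).IsHermitian) (hB2sq : ∀ y, B2 y * B2 y = 1)
    (hB3 : ∀ y, (B3 y).IsHermitian) (hB3sq : ∀ y, B3 y * B3 y = 1)
    (ρ₁ : Matrix (Fin d₁ × Fin d₂) (Fin d₁ × Fin d₂) ℂ)
    (hρ₁ : ρ₁.PosSemidef) (hρ₁tr : ρ₁.trace = 1)
    (η₁ η₂ η₃ : ℝ) (hη₁ : η₁ ∈ Set.Ioc (0 : ℝ) 1) (hη₂ : η₂ ∈ Set.Ioc (0 : ℝ) 1)
    (hη₃ : η₃ ∈ Set.Ioc (0 : ℝ) 1) :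
    let ξ₁ : ℝ := Real.sqrt (1 - η₁ ^ 2)
    let ξ₂ : ℝ := Real.sqrt (1 - η₂ ^ 2)
    let M : Fin 3 → Matrix (Fin d₁) (Fin d₁) ℂ :=
      ![A 0 + A 1 - A 2, A 0 - A 1 + A 2, -A 0 + A 1 + A 2]
    let ρ₂ : Matrix (Fin d₁ × Fin d₂) (Fin d₁ × Fin d₂) ℂ :=
      (((1 + ξ₁) / 2 : ℝ) : ℂ) • ρ₁ + (((1 - ξ₁) / 6 : ℝ) : ℂ) •
        ∑ y : Fin 3, ((1 : Matrix (Fin d₁) (Fin d₁) ℂ) ⊗ₖ B1 y) * ρ₁ *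
          ((1 : Matrix (Fin d₁) (Fin d₁) ℂ) ⊗ₖ B1 y)
    let ρ₃ : Matrix (Fin d₁ × Fin d₂) (Fin d₁ × Fin d₂) ℂ :=
      (((1 + ξ₂) / 2 : ℝ) : ℂ) • ρ₂ + (((1 - ξ₂) / 6 : ℝ) : ℂ) •
        ∑ y : Fin 3, ((1 : Matrix (Fin d₁) (Fin d₁) ℂ) ⊗ₖ B2 y) * ρ₂ *
          ((1 : Matrix (Fin d₁) (Fin d₁) ℂ) ⊗ₖ B2 y)
    (((∑ y : Fin 3, M y ⊗ₖ ((η₁ : ℂ) • B1 y)) * ρ₁).trace).re = 6 * η₁ →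
    (((∑ y : Fin 3, M y ⊗ₖ ((η₂ : ℂ) • B2 y)) * ρ₂).trace).re = 3 * η₂ * (1 + ξ₁) →
    (((∑ y : Fin 3, M y ⊗ₖ ((η₃ : ℂ) • B3 y)) * ρ₃).trace).re
      ≤ 3 * η₃ / 2 * (1 + Real.sqrt (1 - η₁ ^ 2)) * (1 + Real.sqrt (1 - η₂ ^ 2)) := by
  intro ξ₁ ξ₂ M ρ₂ ρ₃ h1 h2
  obtain ⟨hη₁pos, hη₁le⟩ := hη₁
  obtain ⟨hη₂pos, hη₂le⟩ := hη₂
  obtain ⟨hη₃pos, hη₃le⟩ := hη₃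
  have hξ₁nn : 0 ≤ ξ₁ := Real.sqrt_nonneg _
  have hξ₂nn : 0 ≤ ξ₂ := Real.sqrt_nonneg _
  set P : Fin 3 → Matrix (Fin d₁ × Fin d₂) (Fin d₁ × Fin d₂) ℂ :=
    fun y => M y ⊗ₖ (1 : Matrix (Fin d₂) (Fin d₂) ℂ) with hPdef
  set Q : Fin 3 → Matrix (Fin d₁ × Fin d₂) (Fin d₁ × Fin d₂) ℂ :=
    fun y => (1 : Matrix (Fin d₁) (Fin d₁) ℂ) ⊗ₖ B1 y with hQdef
  set Cm : Fin 3 → Matrix (Fin d₁ × Fin d₂) (Fin d₁ × Fin d₂) ℂ :=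
    fun y => (1 : Matrix (Fin d₁) (Fin d₁) ℂ) ⊗ₖ B2 y with hCdef
  set Dm : Fin 3 → Matrix (Fin d₁ × Fin d₂) (Fin d₁ × Fin d₂) ℂ :=
    fun y => (1 : Matrix (Fin d₁) (Fin d₁) ℂ) ⊗ₖ B3 y with hDdef
  have hM0 : M 0 = A 0 + A 1 - A 2 := rfl
  have hM1 : M 1 = A 0 - A 1 + A 2 := rfl
  have hM2 : M 2 = -A 0 + A 1 + A 2 := rfl
  have hMh : ∀ y : Fin 3, (M y)ᴴ = M y := by
    intro y; fin_cases y
    · show (A 0 + A 1 - A 2)ᴴ = A 0 + A 1 - A 2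
      rw [Matrix.conjTranspose_sub, Matrix.conjTranspose_add, (hA 0).eq, (hA 1).eq, (hA 2).eq]
    · show (A 0 - A 1 + A 2)ᴴ = A 0 - A 1 + A 2
      rw [Matrix.conjTranspose_add, Matrix.conjTranspose_sub, (hA 0).eq, (hA 1).eq, (hA 2).eq]
    · show (-A 0 + A 1 + A 2)ᴴ = -A 0 + A 1 + A 2
      rw [Matrix.conjTranspose_add, Matrix.conjTranspose_add, Matrix.conjTranspose_neg,
        (hA 0).eq, (hA 1).eq, (hA 2).eq]
  -- basic commutation / square facts
  have hPQc : ∀ y z, P y * Q z = Q z * P y := by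
    intro y z; simp only [hPdef, hQdef]; rw [kron_AB, kron_BA]
  have hPCc : ∀ y z, P y * Cm z = Cm z * P y := by
    intro y z; simp only [hPdef, hCdef]; rw [kron_AB, kron_BA]
  have hPDc : ∀ y z, P y * Dm z = Dm z * P y := by
    intro y z; simp only [hPdef, hDdef]; rw [kron_AB, kron_BA]
  have hQQc : ∀ y, Q y * Q y = 1 := by
    intro y; simp only [hQdef]; rw [kronB_mul, hB1sq y, Matrix.one_kronecker_one]
  have hCCc : ∀ y, Cm y * Cm y = 1 := by
    intro y; simp only [hCdef]; rw [kronB_mul, hB2sq y, Matrix.one_kronecker_one]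
  -- pairwise identity (My + Mz)² = 4
  have keypair : ∀ (W : Matrix (Fin d₁) (Fin d₁) ℂ), W * W = 1 →
      ((2:ℂ) • W) * ((2:ℂ) • W) = (4:ℂ) • (1 : Matrix (Fin d₁) (Fin d₁) ℂ) := by
    intro W hW; rw [smul_mul_assoc, mul_smul_comm, hW, smul_smul]; norm_num
  have p01 : M 0 + M 1 = (2:ℂ) • A 0 := by rw [hM0, hM1]; module
  have p02 : M 0 + M 2 = (2:ℂ) • A 1 := by rw [hM0, hM2]; module
  have p12 : M 1 + M 2 = (2:ℂ) • A 2 := by rw [hM1, hM2]; module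
  have p10 : M 1 + M 0 = (2:ℂ) • A 0 := by rw [hM0, hM1]; module
  have p20 : M 2 + M 0 = (2:ℂ) • A 1 := by rw [hM0, hM2]; module
  have p21 : M 2 + M 1 = (2:ℂ) • A 2 := by rw [hM1, hM2]; module
  have hPpair : ∀ y z, y ≠ z → (P y + P z) * (P y + P z)
      = (4:ℂ) • (1 : Matrix (Fin d₁ × Fin d₂) (Fin d₁ × Fin d₂) ℂ) := by
    intro y z hyz
    simp only [hPdef]
    rw [← Matrix.add_kronecker, kronA_mul]
    have fin : ∀ (W : Matrix (Fin d₁) (Fin d₁) ℂ), W * W = 1 → (M y + M z) = (2:ℂ) • W →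
        ((M y + M z) * (M y + M z)) ⊗ₖ (1 : Matrix (Fin d₂) (Fin d₂) ℂ)
        = (4:ℂ) • (1 : Matrix (Fin d₁ × Fin d₂) (Fin d₁ × Fin d₂) ℂ) := by
      intro W hW hMW
      rw [hMW, keypair W hW, Matrix.smul_kronecker, Matrix.one_kronecker_one]
    fin_cases y <;> fin_cases z <;>
      first
        | exact absurd rfl hyz
        | exact fin (A 0) (hAsq 0) p01
        | exact fin (A 0) (hAsq 0) p10
        | exact fin (A 1) (hAsq 1) p02
        | exact fin (A 1) (hAsq 1) p20
        | exact fin (A 2) (hAsq 2) p12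
        | exact fin (A 2) (hAsq 2) p21
  -- alice-side identity
  have halice : M 0 * M 0 + M 1 * M 1 + M 2 * M 2 + (A 0 + A 1 + A 2) * (A 0 + A 1 + A 2)
      = (12:ℂ) • (1 : Matrix (Fin d₁) (Fin d₁) ℂ) := by
    rw [hM0, hM1, hM2]
    have e : (A 0 + A 1 - A 2) * (A 0 + A 1 - A 2) + (A 0 - A 1 + A 2) * (A 0 - A 1 + A 2)
        + (-A 0 + A 1 + A 2) * (-A 0 + A 1 + A 2) + (A 0 + A 1 + A 2) * (A 0 + A 1 + A 2)
        = (4:ℂ) • (A 0 * A 0) + (4:ℂ) • (A 1 * A 1) + (4:ℂ) • (A 2 * A 2) := by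
      have en : (A 0 + A 1 - A 2) * (A 0 + A 1 - A 2) + (A 0 - A 1 + A 2) * (A 0 - A 1 + A 2)
          + (-A 0 + A 1 + A 2) * (-A 0 + A 1 + A 2) + (A 0 + A 1 + A 2) * (A 0 + A 1 + A 2)
          = 4 • (A 0 * A 0) + 4 • (A 1 * A 1) + 4 • (A 2 * A 2) := by
        noncomm_ring
      rw [en]
      module
    rw [e, hAsq 0, hAsq 1, hAsq 2]
    module
  -- SOS operators
  set S : Matrix (Fin d₁ × Fin d₂) (Fin d₁ × Fin d₂) ℂ :=
    (A 0 + A 1 + A 2) ⊗ₖ (1 : Matrix (Fin d₂) (Fin d₂) ℂ) with hSdef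
  set Nn : Fin 3 → Matrix (Fin d₁ × Fin d₂) (Fin d₁ × Fin d₂) ℂ :=
    fun y => P y - (2:ℂ) • Q y with hNdef
  have hNN : ∀ y, Nn y * Nn y = (M y * M y) ⊗ₖ (1 : Matrix (Fin d₂) (Fin d₂) ℂ)
      + (4:ℂ) • (1 : Matrix (Fin d₁ × Fin d₂) (Fin d₁ × Fin d₂) ℂ) - (4:ℂ) • (M y ⊗ₖ B1 y) := by
    intro y
    simp only [hNdef, hPdef, hQdef]
    simp only [sub_mul, mul_sub, smul_mul_assoc, mul_smul_comm, smul_smul]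
    rw [kron_AB, kron_BA, kronB_mul, kronA_mul, hB1sq y, Matrix.one_kronecker_one]
    module
  have hSOS : Nn 0 * Nn 0 + Nn 1 * Nn 1 + Nn 2 * Nn 2 + S * S
      = (24:ℂ) • (1 : Matrix (Fin d₁ × Fin d₂) (Fin d₁ × Fin d₂) ℂ)
        - (4:ℂ) • (M 0 ⊗ₖ B1 0 + M 1 ⊗ₖ B1 1 + M 2 ⊗ₖ B1 2) := by
    rw [hNN 0, hNN 1, hNN 2]
    have cS : S * S = ((A 0 + A 1 + A 2) * (A 0 + A 1 + A 2)) ⊗ₖ (1 : Matrix (Fin d₂) (Fin d₂) ℂ) := by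
      rw [hSdef, kronA_mul]
    rw [cS]
    have hkr : (M 0 * M 0) ⊗ₖ (1 : Matrix (Fin d₂) (Fin d₂) ℂ) + (M 1 * M 1) ⊗ₖ 1
        + (M 2 * M 2) ⊗ₖ 1 + ((A 0 + A 1 + A 2) * (A 0 + A 1 + A 2)) ⊗ₖ 1
        = (12:ℂ) • (1 : Matrix (Fin d₁ × Fin d₂) (Fin d₁ × Fin d₂) ℂ) := by
      rw [← Matrix.add_kronecker, ← Matrix.add_kronecker, ← Matrix.add_kronecker, halice,
        Matrix.smul_kronecker, Matrix.one_kronecker_one]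
    have lin : ∀ (K0 K1 K2 KS E W0 W1 W2 : Matrix (Fin d₁ × Fin d₂) (Fin d₁ × Fin d₂) ℂ),
        K0 + K1 + K2 + KS = (12:ℂ) • E →
        (K0 + (4:ℂ) • E - (4:ℂ) • W0) + (K1 + (4:ℂ) • E - (4:ℂ) • W1)
          + (K2 + (4:ℂ) • E - (4:ℂ) • W2) + KS
        = (24:ℂ) • E - (4:ℂ) • (W0 + W1 + W2) := by
      intro K0 K1 K2 KS E W0 W1 W2 h
      have : K0 + K1 + K2 + KS - (12:ℂ) • E = 0 := by rw [h]; simp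
      calc (K0 + (4:ℂ) • E - (4:ℂ) • W0) + (K1 + (4:ℂ) • E - (4:ℂ) • W1)
            + (K2 + (4:ℂ) • E - (4:ℂ) • W2) + KS
          = (K0 + K1 + K2 + KS - (12:ℂ) • E) + (24:ℂ) • E - (4:ℂ) • (W0 + W1 + W2) := by
            module
        _ = (24:ℂ) • E - (4:ℂ) • (W0 + W1 + W2) := by rw [this]; simp
    exact lin _ _ _ _ _ _ _ _ hkr
  -- trace bookkeeping
  set W1 : Matrix (Fin d₁ × Fin d₂) (Fin d₁ × Fin d₂) ℂ :=
    M 0 ⊗ₖ B1 0 + M 1 ⊗ₖ B1 1 + M 2 ⊗ₖ B1 2 with hW1def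
  set t : ℂ := (W1 * ρ₁).trace with htdef
  obtain ⟨Bf, hBf⟩ : ∃ Bf : Matrix (Fin d₁ × Fin d₂) (Fin d₁ × Fin d₂) ℂ, ρ₁ = Bfᴴ * Bf := by
    open scoped MatrixOrder in exact CStarAlgebra.nonneg_iff_eq_star_mul_self.mp hρ₁.nonneg
  have hQherm : ∀ y, (Q y)ᴴ = Q y := by
    intro y; simp only [hQdef]; rw [kronT, Matrix.conjTranspose_one, (hB1 y).eq]
  have hCherm : ∀ y, (Cm y)ᴴ = Cm y := by
    intro y; simp only [hCdef]; rw [kronT, Matrix.conjTranspose_one, (hB2 y).eq]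
  have hPherm : ∀ y, (P y)ᴴ = P y := by
    intro y; simp only [hPdef]; rw [kronT, Matrix.conjTranspose_one, hMh y]
  have hNherm : ∀ y, (Nn y)ᴴ = Nn y := by
    intro y
    simp only [hNdef]
    rw [Matrix.conjTranspose_sub, Matrix.conjTranspose_smul, hPherm y, hQherm y]
    norm_num
  have hSherm : Sᴴ = S := by
    rw [hSdef, kronT, Matrix.conjTranspose_one, Matrix.conjTranspose_add,
      Matrix.conjTranspose_add, (hA 0).eq, (hA 1).eq, (hA 2).eq]
  have keytr : ∀ (K : Matrix (Fin d₁ × Fin d₂) (Fin d₁ × Fin d₂) ℂ), Kᴴ = K →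
      ((Bf * K)ᴴ * (Bf * K)).trace = ((K * K) * ρ₁).trace := by
    intro K hK
    rw [Matrix.conjTranspose_mul, hK]
    have e : (K * Bfᴴ) * (Bf * K) = K * ρ₁ * K := by
      rw [hBf]; simp only [Matrix.mul_assoc]
    rw [e, Matrix.trace_mul_cycle]
  have req : ((Bf * Nn 0)ᴴ * (Bf * Nn 0)).trace + ((Bf * Nn 1)ᴴ * (Bf * Nn 1)).trace
      + ((Bf * Nn 2)ᴴ * (Bf * Nn 2)).trace + ((Bf * S)ᴴ * (Bf * S)).trace
      = 24 - 4 * t := by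
    rw [keytr (Nn 0) (hNherm 0), keytr (Nn 1) (hNherm 1), keytr (Nn 2) (hNherm 2),
      keytr S hSherm, ← Matrix.trace_add, ← Matrix.trace_add, ← Matrix.trace_add,
      ← Matrix.add_mul, ← Matrix.add_mul, ← Matrix.add_mul, hSOS, Matrix.sub_mul,
      smul_mul_assoc, smul_mul_assoc, Matrix.one_mul, Matrix.trace_sub, Matrix.trace_smul,
      Matrix.trace_smul, hρ₁tr, smul_eq_mul, smul_eq_mul, mul_one]
  have hre_t : t.re = 6 := by
    have e1 : (∑ y : Fin 3, M y ⊗ₖ ((η₁ : ℂ) • B1 y)) = (η₁ : ℂ) • W1 := by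
      rw [Fin.sum_univ_three, hW1def]
      simp only [Matrix.kronecker_smul]
      module
    rw [e1, smul_mul_assoc, Matrix.trace_smul, ← htdef, smul_eq_mul,
      Complex.re_ofReal_mul] at h1
    have := mul_left_cancel₀ (ne_of_gt hη₁pos) (by linarith : η₁ * t.re = η₁ * 6)
    exact this
  have hre_req : ((Bf * Nn 0)ᴴ * (Bf * Nn 0)).trace.re + ((Bf * Nn 1)ᴴ * (Bf * Nn 1)).trace.re
      + ((Bf * Nn 2)ᴴ * (Bf * Nn 2)).trace.re + ((Bf * S)ᴴ * (Bf * S)).trace.re = 0 := by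
    have := congrArg Complex.re req
    simp only [Complex.add_re, Complex.sub_re, Complex.mul_re] at this ⊢
    rw [this]
    simp [hre_t]
    norm_num
  have nn0 := trace_conjT_self_re_nonneg (Bf * Nn 0)
  have nn1 := trace_conjT_self_re_nonneg (Bf * Nn 1)
  have nn2 := trace_conjT_self_re_nonneg (Bf * Nn 2)
  have nnS := trace_conjT_self_re_nonneg (Bf * S)
  have hz0 : Bf * Nn 0 = 0 := eq_zero_of_trace_conjT_self_re _ (by linarith)
  have hz1 : Bf * Nn 1 = 0 := eq_zero_of_trace_conjT_self_re _ (by linarith)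
  have hz2 : Bf * Nn 2 = 0 := eq_zero_of_trace_conjT_self_re _ (by linarith)
  have hzS : Bf * S = 0 := eq_zero_of_trace_conjT_self_re _ (by linarith)
  have killN : ∀ (K : Matrix (Fin d₁ × Fin d₂) (Fin d₁ × Fin d₂) ℂ), Kᴴ = K →
      Bf * K = 0 → K * ρ₁ = 0 := by
    intro K hK h0
    have : K * ρ₁ = (Bf * K)ᴴ * Bf := by
      rw [Matrix.conjTranspose_mul, hK, hBf, Matrix.mul_assoc]
    rw [this, h0, Matrix.conjTranspose_zero, Matrix.zero_mul]
  have hN0 : ∀ y, Nn y * ρ₁ = 0 := by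
    intro y; fin_cases y
    · exact killN _ (hNherm 0) hz0
    · exact killN _ (hNherm 1) hz1
    · exact killN _ (hNherm 2) hz2
  have hS0 : S * ρ₁ = 0 := killN _ hSherm hzS
  have hPρ : ∀ y, P y * ρ₁ = (2:ℂ) • (Q y * ρ₁) := by
    intro y
    have := hN0 y
    simp only [hNdef] at this
    rw [Matrix.sub_mul, smul_mul_assoc] at this
    exact sub_eq_zero.mp this
  have hρP : ∀ y, ρ₁ * P y = (2:ℂ) • (ρ₁ * Q y) := by
    intro y
    have := congrArg Matrix.conjTranspose (hPρ y)
    rw [Matrix.conjTranspose_mul, Matrix.conjTranspose_smul, Matrix.conjTranspose_mul,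
      hPherm y, hQherm y, hρ₁.isHermitian.eq] at this
    rw [this]
    norm_num
  have hQsum : (Q 0 + Q 1 + Q 2) * ρ₁ = 0 := by
    have hMsum : (A 0 + A 1 + A 2) = M 0 + M 1 + M 2 := by rw [hM0, hM1, hM2]; module
    have e : S = P 0 + P 1 + P 2 := by
      rw [hSdef, hMsum]
      simp only [hPdef]
      rw [← Matrix.add_kronecker, ← Matrix.add_kronecker]
    have e2 : (2:ℂ) • ((Q 0 + Q 1 + Q 2) * ρ₁) = 0 := by
      calc (2:ℂ) • ((Q 0 + Q 1 + Q 2) * ρ₁) = P 0 * ρ₁ + P 1 * ρ₁ + P 2 * ρ₁ := by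
            rw [hPρ 0, hPρ 1, hPρ 2]
            simp only [Matrix.add_mul, smul_add]
        _ = (P 0 + P 1 + P 2) * ρ₁ := by rw [Matrix.add_mul, Matrix.add_mul]
        _ = S * ρ₁ := by rw [e]
        _ = 0 := hS0
    rcases smul_eq_zero.mp e2 with h | h
    · norm_num at h
    · exact h
  have hDherm : ∀ y, (Dm y)ᴴ = Dm y := by
    intro y; simp only [hDdef]; rw [kronT, Matrix.conjTranspose_one, (hB3 y).eq]
  have hDDc : ∀ y, Dm y * Dm y = 1 := by
    intro y; simp only [hDdef]; rw [kronB_mul, hB3sq y, Matrix.one_kronecker_one]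
  have hV := core_V P Q ρ₁ hPQc hQQc hPρ hPpair hQsum
  have hρ₂eq : ρ₂ = (((1 + ξ₁) / 2 : ℝ) : ℂ) • ρ₁ + (((1 - ξ₁) / 6 : ℝ) : ℂ) •
      (Q 0 * ρ₁ * Q 0 + Q 1 * ρ₁ * Q 1 + Q 2 * ρ₁ * Q 2) := by
    show (((1 + ξ₁) / 2 : ℝ) : ℂ) • ρ₁ + (((1 - ξ₁) / 6 : ℝ) : ℂ) •
        ∑ y : Fin 3, ((1 : Matrix (Fin d₁) (Fin d₁) ℂ) ⊗ₖ B1 y) * ρ₁ *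
          ((1 : Matrix (Fin d₁) (Fin d₁) ℂ) ⊗ₖ B1 y) = _
    rw [Fin.sum_univ_three]
  have hBell2 : ∀ z : Fin 3, ((M z ⊗ₖ ((η₂ : ℂ) • B2 z)) * ρ₂).trace
      = (η₂ : ℂ) * ((2:ℂ) * (((1 + ξ₁) / 2 : ℝ) : ℂ)) * ((Cm z * (Q z * ρ₁)).trace) := by
    intro z
    have e1 : M z ⊗ₖ ((η₂ : ℂ) • B2 z) = (η₂ : ℂ) • (Cm z * P z) := by
      rw [Matrix.kronecker_smul]
      congr 1
      simp only [hCdef, hPdef]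
      rw [kron_BA]
    rw [e1, smul_mul_assoc, Matrix.trace_smul, smul_eq_mul, Matrix.mul_assoc, hρ₂eq,
      core_red2 P Q ρ₁ (Cm z) _ _ hPQc (fun y => (hPCc y z).symm) hQQc hPρ hρP hV z]
    ring
  have h2' : ((Cm 0 * (Q 0 * ρ₁)).trace).re + ((Cm 1 * (Q 1 * ρ₁)).trace).re
      + ((Cm 2 * (Q 2 * ρ₁)).trace).re = 3 := by
    rw [Fin.sum_univ_three, Matrix.add_mul, Matrix.add_mul, Matrix.trace_add, Matrix.trace_add,
      hBell2 0, hBell2 1, hBell2 2] at h2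
    have hc : (η₂ : ℂ) * ((2:ℂ) * (((1 + ξ₁) / 2 : ℝ) : ℂ)) = ((η₂ * (1 + ξ₁) : ℝ) : ℂ) := by
      push_cast; ring
    rw [hc, ← mul_add, ← mul_add, Complex.re_ofReal_mul] at h2
    have hpos : 0 < η₂ * (1 + ξ₁) := by nlinarith
    have h3 := mul_left_cancel₀ (ne_of_gt hpos)
      (by linarith : η₂ * (1 + ξ₁) * (((Cm 0 * (Q 0 * ρ₁)).trace + (Cm 1 * (Q 1 * ρ₁)).trace
        + (Cm 2 * (Q 2 * ρ₁)).trace).re) = η₂ * (1 + ξ₁) * 3)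
    simpa [Complex.add_re] using h3
  have hUnit : ∀ z : Fin 3, ((Cm z * (Q z * ρ₁)).trace).re ≤ 1 ∧
      (((Cm z * (Q z * ρ₁)).trace).re = 1 → (Cm z * Q z) * ρ₁ = ρ₁) := by
    intro z
    have hassoc : Cm z * (Q z * ρ₁) = (Cm z * Q z) * ρ₁ := (Matrix.mul_assoc _ _ _).symm
    have hU : (Cm z * Q z)ᴴ * (Cm z * Q z) = 1 := by
      rw [Matrix.conjTranspose_mul, hCherm z, hQherm z]
      calc Q z * Cm z * (Cm z * Q z) = Q z * ((Cm z * Cm z) * Q z) := by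
            simp only [Matrix.mul_assoc]
        _ = 1 := by rw [hCCc z, Matrix.one_mul, hQQc z]
    have := unitary_trace_re_le ρ₁ (Cm z * Q z) hρ₁ hρ₁tr hU
    rw [hassoc]
    exact this
  have heach : ∀ z : Fin 3, (Cm z * Q z) * ρ₁ = ρ₁ := by
    have l0 := (hUnit 0).1
    have l1 := (hUnit 1).1
    have l2 := (hUnit 2).1
    intro z
    fin_cases z
    · exact (hUnit 0).2 (by linarith)
    · exact (hUnit 1).2 (by linarith)
    · exact (hUnit 2).2 (by linarith)
  have hCρ : ∀ z, Cm z * ρ₁ = Q z * ρ₁ := by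
    intro z
    have e2 := congrArg (fun X => Cm z * X) (heach z)
    have e3 : Cm z * ((Cm z * Q z) * ρ₁) = Q z * ρ₁ := by
      calc Cm z * ((Cm z * Q z) * ρ₁) = (Cm z * Cm z) * (Q z * ρ₁) := by
            simp only [Matrix.mul_assoc]
        _ = Q z * ρ₁ := by rw [hCCc z, Matrix.one_mul]
    exact e2.symm.trans e3
  have hρC : ∀ z, ρ₁ * Cm z = ρ₁ * Q z := by
    intro z
    have e := congrArg Matrix.conjTranspose (heach z)
    rw [Matrix.conjTranspose_mul, Matrix.conjTranspose_mul, hCherm z, hQherm z,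
      hρ₁.isHermitian.eq] at e
    have e2 := congrArg (fun X => X * Cm z) e
    have e3 : ρ₁ * (Q z * Cm z) * Cm z = ρ₁ * Q z := by
      calc ρ₁ * (Q z * Cm z) * Cm z = ρ₁ * (Q z * (Cm z * Cm z)) := by
            simp only [Matrix.mul_assoc]
        _ = ρ₁ * Q z := by rw [hCCc z, Matrix.mul_one]
    exact e2.symm.trans e3
  have hρ₃eq : ρ₃ = (((1 + ξ₂) / 2 : ℝ) : ℂ) • ρ₂ + (((1 - ξ₂) / 6 : ℝ) : ℂ) •
      (Cm 0 * ρ₂ * Cm 0 + Cm 1 * ρ₂ * Cm 1 + Cm 2 * ρ₂ * Cm 2) := by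
    show (((1 + ξ₂) / 2 : ℝ) : ℂ) • ρ₂ + (((1 - ξ₂) / 6 : ℝ) : ℂ) •
        ∑ y : Fin 3, ((1 : Matrix (Fin d₁) (Fin d₁) ℂ) ⊗ₖ B2 y) * ρ₂ *
          ((1 : Matrix (Fin d₁) (Fin d₁) ℂ) ⊗ₖ B2 y) = _
    rw [Fin.sum_univ_three]
  have hBell3 : ∀ z : Fin 3, ((M z ⊗ₖ ((η₃ : ℂ) • B3 z)) * ρ₃).trace
      = (η₃ : ℂ) * ((2:ℂ) * (((1 + ξ₂) / 2 : ℝ) : ℂ) * (((1 + ξ₁) / 2 : ℝ) : ℂ))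
        * ((Dm z * (Q z * ρ₁)).trace) := by
    intro z
    have e1 : M z ⊗ₖ ((η₃ : ℂ) • B3 z) = (η₃ : ℂ) • (Dm z * P z) := by
      rw [Matrix.kronecker_smul]
      congr 1
      simp only [hDdef, hPdef]
      rw [kron_BA]
    rw [e1, smul_mul_assoc, Matrix.trace_smul, smul_eq_mul, Matrix.mul_assoc, hρ₃eq,
      core_red3 P Q Cm ρ₁ ρ₂ (Dm z) _ _ _ _ hρ₂eq hPQc hPCc (fun y => (hPDc y z).symm)
        hQQc hCCc hPρ hρP hCρ hρC hV z]
    ring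
  have hUnit3 : ∀ z : Fin 3, ((Dm z * (Q z * ρ₁)).trace).re ≤ 1 := by
    intro z
    have hU : (Dm z * Q z)ᴴ * (Dm z * Q z) = 1 := by
      rw [Matrix.conjTranspose_mul, hDherm z, hQherm z]
      calc Q z * Dm z * (Dm z * Q z) = Q z * ((Dm z * Dm z) * Q z) := by
            simp only [Matrix.mul_assoc]
        _ = 1 := by rw [hDDc z, Matrix.one_mul, hQQc z]
    have := (unitary_trace_re_le ρ₁ (Dm z * Q z) hρ₁ hρ₁tr hU).1
    rw [show Dm z * (Q z * ρ₁) = (Dm z * Q z) * ρ₁ from (Matrix.mul_assoc _ _ _).symm]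
    exact this
  rw [Fin.sum_univ_three, Matrix.add_mul, Matrix.add_mul, Matrix.trace_add, Matrix.trace_add,
    hBell3 0, hBell3 1, hBell3 2, ← mul_add, ← mul_add]
  have hc3 : (η₃ : ℂ) * ((2:ℂ) * (((1 + ξ₂) / 2 : ℝ) : ℂ) * (((1 + ξ₁) / 2 : ℝ) : ℂ))
      = ((η₃ * ((1 + ξ₂) * (1 + ξ₁) / 2) : ℝ) : ℂ) := by
    push_cast; ring
  rw [hc3, Complex.re_ofReal_mul]
  have hw : ((Dm 0 * (Q 0 * ρ₁)).trace + (Dm 1 * (Q 1 * ρ₁)).trace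
      + (Dm 2 * (Q 2 * ρ₁)).trace).re ≤ 3 := by
    simp only [Complex.add_re]
    linarith [hUnit3 0, hUnit3 1, hUnit3 2]
  have hcnn : 0 ≤ η₃ * ((1 + ξ₂) * (1 + ξ₁) / 2) :=
    mul_nonneg hη₃pos.le (div_nonneg (mul_nonneg (by linarith) (by linarith)) (by norm_num))
  have hξ₁val : ξ₁ = Real.sqrt (1 - η₁ ^ 2) := rfl
  have hξ₂val : ξ₂ = Real.sqrt (1 - η₂ ^ 2) := rfl
  calc η₃ * ((1 + ξ₂) * (1 + ξ₁) / 2) * ((Dm 0 * (Q 0 * ρ₁)).trace + (Dm 1 * (Q 1 * ρ₁)).trace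
        + (Dm 2 * (Q 2 * ρ₁)).trace).re
      ≤ η₃ * ((1 + ξ₂) * (1 + ξ₁) / 2) * 3 := mul_le_mul_of_nonneg_left hw hcnn
    _ = 3 * η₃ / 2 * (1 + Real.sqrt (1 - η₁ ^ 2)) * (1 + Real.sqrt (1 - η₂ ^ 2)) := by
        rw [← hξ₁val, ← hξ₂val]; ring
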